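/- Let ξ be a random vector on a finite probability space with σ-algebra H ⊆ F, and suppose ξ takes values a.s. in a nonempty convex set W. If η is an H-measurable random vector with η(ω) ∈ ri(conv(support of the conditional distribution of ξ given H at ω)) a.s., then there exist a random variable δ > 0 and an H-measurable-conditioned modification such that E[δ | H] = 1 and E[δ ξ | H] = η a.s. -/

import Mathlib

open Finset Pointwise RealInnerProductSpace

noncomputable section

abbrev E (d : ℕ) : Type := EuclideanSpace ℝ (Fin d)

lemma weights_of_mem_convexHull {Ω : Type} [DecidableEq Ω] {d : ℕ} (A : Finset Ω)
    (f : Ω → E d) {z : E d} (hz : z ∈ convexHull ℝ (f '' (A : Set Ω))) :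
    ∃ μ : Ω → ℝ, (∀ a ∈ A, 0 ≤ μ a) ∧ ∑ a ∈ A, μ a = 1 ∧ ∑ a ∈ A, μ a • f a = z := by
  classical
  rw [← Finset.coe_image, Finset.mem_convexHull'] at hz
  obtain ⟨w, hw0, hw1, hwz⟩ := hz
  set μ : Ω → ℝ := fun a => w (f a) / ((A.filter (fun b => f b = f a)).card : ℝ) with hμ
  have hcard : ∀ x ∈ A.image f, (0:ℝ) < ((A.filter (fun b => f b = x)).card : ℝ) := by
    intro x hx
    obtain ⟨a₀, ha₀, rfl⟩ := Finset.mem_image.mp hx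
    exact Nat.cast_pos.mpr (Finset.card_pos.mpr ⟨a₀, Finset.mem_filter.mpr ⟨ha₀, rfl⟩⟩)
  have hterm : ∀ x ∈ A.image f, ∀ a ∈ A.filter (fun b => f b = x),
      μ a = w x / ((A.filter (fun b => f b = x)).card : ℝ) := by
    intro x hx a ha
    have h2 : f a = x := (Finset.mem_filter.mp ha).2
    rw [hμ]
    simp only
    rw [h2]
  have hfib : ∀ x ∈ A.image f, ∑ a ∈ A.filter (fun b => f b = x), μ a = w x := by
    intro x hx
    rw [Finset.sum_congr rfl (hterm x hx), Finset.sum_const, nsmul_eq_mul, mul_comm,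
      div_mul_cancel₀ _ (hcard x hx).ne']
  have hfibv : ∀ x ∈ A.image f,
      ∑ a ∈ A.filter (fun b => f b = x), μ a • f a = w x • x := by
    intro x hx
    have : ∀ a ∈ A.filter (fun b => f b = x),
        μ a • f a = (w x / ((A.filter (fun b => f b = x)).card : ℝ)) • x := by
      intro a ha
      rw [hterm x hx a ha, (Finset.mem_filter.mp ha).2]
    rw [Finset.sum_congr rfl this, Finset.sum_const, ← Nat.cast_smul_eq_nsmul ℝ, smul_smul]
    congr 1
    rw [mul_comm, div_mul_cancel₀ _ (hcard x hx).ne']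
  refine ⟨μ, ?_, ?_, ?_⟩
  · intro a ha
    have : (0:ℝ) ≤ w (f a) := hw0 _ (Finset.mem_image_of_mem f ha)
    rw [hμ]
    positivity
  · calc ∑ a ∈ A, μ a
        = ∑ x ∈ A.image f, ∑ a ∈ A.filter (fun b => f b = x), μ a :=
          (Finset.sum_fiberwise_of_maps_to (fun a ha => Finset.mem_image_of_mem f ha) μ).symm
      _ = ∑ x ∈ A.image f, w x := Finset.sum_congr rfl hfib
      _ = 1 := hw1
  · calc ∑ a ∈ A, μ a • f a
        = ∑ x ∈ A.image f, ∑ a ∈ A.filter (fun b => f b = x), μ a • f a :=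
          (Finset.sum_fiberwise_of_maps_to (fun a ha => Finset.mem_image_of_mem f ha) _).symm
      _ = ∑ x ∈ A.image f, w x • x := Finset.sum_congr rfl hfibv
      _ = z := hwz

lemma exists_pos_perturb {d : ℕ} {s : Set (E d)} {y b : E d}
    (hy : y ∈ intrinsicInterior ℝ s) (hb : b ∈ s) :
    ∃ ε : ℝ, 0 < ε ∧ y + ε • (y - b) ∈ s := by
  obtain ⟨z, hz, hzy⟩ := mem_intrinsicInterior.mp hy
  rw [mem_interior_iff_mem_nhds, Metric.mem_nhds_iff] at hz
  obtain ⟨r, hr, hball⟩ := hz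
  have hyspan : y ∈ affineSpan ℝ s := hzy ▸ z.2
  have hbspan : b ∈ affineSpan ℝ s := subset_affineSpan ℝ s hb
  set ε : ℝ := r / (2 * (‖y - b‖ + 1)) with hε
  have hεpos : 0 < ε := by positivity
  refine ⟨ε, hεpos, ?_⟩
  have hpspan : y + ε • (y - b) ∈ affineSpan ℝ s := by
    have : ε • (y - b) +ᵥ y ∈ affineSpan ℝ s :=
      AffineSubspace.vadd_mem_of_mem_direction
        (Submodule.smul_mem _ ε (AffineSubspace.vsub_mem_direction hyspan hbspan)) hyspan
    simpa [vadd_eq_add, add_comm] using this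
  have hq : (⟨y + ε • (y - b), hpspan⟩ : affineSpan ℝ s) ∈ Metric.ball z r := by
    rw [Metric.mem_ball, Subtype.dist_eq]
    simp only [hzy]
    rw [dist_eq_norm]
    have h3 : y + ε • (y - b) - y = ε • (y - b) := by abel
    rw [h3, norm_smul, Real.norm_eq_abs, abs_of_pos hεpos]
    have h1 : ε * ‖y - b‖ ≤ ε * (‖y - b‖ + 1) := by
      apply mul_le_mul_of_nonneg_left (by linarith) hεpos.le
    have h2 : ε * (‖y - b‖ + 1) = r / 2 := by
      rw [hε]; field_simp
    linarith
  have := hball hq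
  simpa using this

lemma exists_pos_weights {Ω : Type} [DecidableEq Ω] {d : ℕ} (A : Finset Ω) (hA : A.Nonempty)
    (f : Ω → E d) {y : E d}
    (hy : y ∈ intrinsicInterior ℝ (convexHull ℝ (f '' (A : Set Ω)))) :
    ∃ w : Ω → ℝ, (∀ a ∈ A, 0 < w a) ∧ ∑ a ∈ A, w a = 1 ∧ ∑ a ∈ A, w a • f a = y := by
  have hcard : (0:ℝ) < (A.card : ℝ) := by exact_mod_cast Finset.card_pos.mpr hA
  set b : E d := ∑ a ∈ A, (A.card : ℝ)⁻¹ • f a with hbdef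
  have hb : b ∈ convexHull ℝ (f '' (A : Set Ω)) := by
    apply (convex_convexHull ℝ _).sum_mem (fun a _ => by positivity)
      (by rw [Finset.sum_const, nsmul_eq_mul]; field_simp)
    exact fun a ha => subset_convexHull ℝ _ ⟨a, ha, rfl⟩
  obtain ⟨ε, hεpos, hzmem⟩ := exists_pos_perturb hy hb
  obtain ⟨μ, hμ0, hμ1, hμz⟩ := weights_of_mem_convexHull A f hzmem
  have h1ε : (0:ℝ) < 1 + ε := by linarith
  refine ⟨fun a => (μ a + ε * (A.card : ℝ)⁻¹) / (1 + ε), ?_, ?_, ?_⟩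
  · intro a ha
    have := hμ0 a ha
    positivity
  · rw [← Finset.sum_div, Finset.sum_add_distrib, hμ1, Finset.sum_const, nsmul_eq_mul]
    field_simp
  · have hkey : ∑ a ∈ A, ((μ a + ε * (A.card : ℝ)⁻¹) / (1 + ε)) • f a
        = (1 + ε)⁻¹ • ∑ a ∈ A, (μ a • f a + ε • ((A.card : ℝ)⁻¹ • f a)) := by
      rw [Finset.smul_sum]
      refine Finset.sum_congr rfl fun a _ => ?_
      match_scalars
      field_simp
    rw [hkey, Finset.sum_add_distrib, hμz, ← Finset.smul_sum, ← hbdef]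
    rw [show y + ε • (y - b) + ε • b = (1 + ε) • y by
      rw [smul_sub, add_smul, one_smul]; abel]
    rw [smul_smul, inv_mul_cancel₀ h1ε.ne', one_smul]

theorem martingale_selection_step {Ω : Type} [Fintype Ω] [DecidableEq Ω] {d : ℕ}
    (P : Ω → ℝ) (hP : ∀ ω, 0 < P ω) (hP1 : ∑ ω, P ω = 1)
    (atom : Ω → Finset Ω)
    (hmem : ∀ ω, ω ∈ atom ω)
    (hpart : ∀ ω ω', ω' ∈ atom ω → atom ω' = atom ω)
    (W : Set (E d)) (hWne : W.Nonempty) (hWconv : Convex ℝ W)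
    (ξ : Ω → E d) (hξW : ∀ ω, ξ ω ∈ W)
    (η : Ω → E d) (hηmeas : ∀ ω ω', ω' ∈ atom ω → η ω' = η ω)
    (hηri : ∀ ω, η ω ∈ intrinsicInterior ℝ (convexHull ℝ (ξ '' (atom ω : Set Ω)))) :
    ∃ δ : Ω → ℝ, (∀ ω, 0 < δ ω) ∧
      (∀ ω, (∑ ω' ∈ atom ω, P ω')⁻¹ * ∑ ω' ∈ atom ω, P ω' * δ ω' = 1) ∧
      (∀ ω, (∑ ω' ∈ atom ω, P ω')⁻¹ • ∑ ω' ∈ atom ω, (P ω' * δ ω') • ξ ω' = η ω) := by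
  classical
  set Q : Finset Ω → (Ω → ℝ) → Prop := fun A w =>
    (∀ a ∈ A, 0 < w a) ∧ ∑ a ∈ A, w a = 1 ∧ ∀ ω₀ ∈ A, ∑ a ∈ A, w a • ξ a = η ω₀ with hQ
  have hex : ∀ ω, ∃ w, Q (atom ω) w := by
    intro ω
    obtain ⟨w, hw0, hw1, hwy⟩ := exists_pos_weights (atom ω) ⟨ω, hmem ω⟩ ξ (hηri ω)
    exact ⟨w, hw0, hw1, fun ω₀ h₀ => by rw [hwy, hηmeas ω ω₀ h₀]⟩
  set g : Finset Ω → (Ω → ℝ) := fun A => if h : ∃ w, Q A w then h.choose else fun _ => 0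
    with hg
  have hgQ : ∀ ω, Q (atom ω) (g (atom ω)) := by
    intro ω
    rw [hg]
    simp only [dif_pos (hex ω)]
    exact (hex ω).choose_spec
  set δ : Ω → ℝ := fun ω => (∑ ω' ∈ atom ω, P ω') * g (atom ω) ω / P ω with hδ
  have hS : ∀ ω, 0 < ∑ ω' ∈ atom ω, P ω' :=
    fun ω => Finset.sum_pos (fun i _ => hP i) ⟨ω, hmem ω⟩
  have hδval : ∀ ω ω', ω' ∈ atom ω → P ω' * δ ω' = (∑ a ∈ atom ω, P a) * g (atom ω) ω' := by
    intro ω ω' h'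
    simp only [hδ]
    rw [hpart ω ω' h', mul_comm, div_mul_cancel₀ _ (hP ω').ne']
  refine ⟨δ, ?_, ?_, ?_⟩
  · intro ω
    have h0 := (hgQ ω).1 ω (hmem ω)
    have h1 := hS ω
    have h2 := hP ω
    simp only [hδ]
    positivity
  · intro ω
    have h1 : ∑ ω' ∈ atom ω, P ω' * δ ω'
        = (∑ a ∈ atom ω, P a) * ∑ ω' ∈ atom ω, g (atom ω) ω' := by
      rw [Finset.mul_sum]
      exact Finset.sum_congr rfl fun ω' h' => hδval ω ω' h'
    rw [h1, (hgQ ω).2.1, mul_one, inv_mul_cancel₀ (hS ω).ne']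
  · intro ω
    have h2 : ∑ ω' ∈ atom ω, (P ω' * δ ω') • ξ ω'
        = (∑ a ∈ atom ω, P a) • ∑ ω' ∈ atom ω, g (atom ω) ω' • ξ ω' := by
      rw [Finset.smul_sum]
      refine Finset.sum_congr rfl fun ω' h' => ?_
      rw [hδval ω ω' h', mul_smul]
    rw [h2, (hgQ ω).2.2 ω (hmem ω), smul_smul, inv_mul_cancel₀ (hS ω).ne', one_smul]
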